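/- arXiv:1803.03027 — 4 statements merged into one kernel-verified Lean document; each statement's English description precedes it below -/
import Mathlib

section
/- Let H be a complex Hilbert space, let T be a densely defined self-adjoint unbounded operator on H (a linear map defined on a dense subspace Dom(T) ⊆ H that equals its adjoint), and let x be a bounded operator on H. Define L(x) := sup { |⟨ξ, x*(Tη)⟩ − ⟨x(Tξ), η⟩| : ξ, η ∈ Dom(T), ‖ξ‖ = ‖η‖ = 1 } ∈ [0, ∞]. Then L(x) < ∞ if and only if x maps Dom(T) into Dom(T) and the commutator ξ ↦ T(xξ) − x(Tξ), defined on Dom(T), is bounded (i.e., admits a bounded extension to H). Moreover, in this case L(x) equals the operator norm of this bounded extension, i.e., L(x) = sup { ‖T(xξ) − x(Tξ)‖ : ξ ∈ Dom(T), ‖ξ‖ ≤ 1 }. -/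
open scoped ENNReal

/-- The seminorm `L(x) = sup { |⟨ξ, x*(Tη)⟩ − ⟨x(Tξ), η⟩| : ξ, η ∈ Dom(T), ‖ξ‖ = ‖η‖ = 1 }`,
valued in `[0,∞]`. -/
noncomputable def Lsem {H : Type*} [NormedAddCommGroup H] [InnerProductSpace ℂ H]
    [CompleteSpace H] (T : H →ₗ.[ℂ] H) (x : H →L[ℂ] H) : ℝ≥0∞ :=
  ⨆ (ξ : T.domain) (_ : ‖(ξ : H)‖ = 1) (η : T.domain) (_ : ‖(η : H)‖ = 1),
    (‖(inner (𝕜 := ℂ) (ξ : H) ((star x) (T η)) : ℂ) -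
      (inner (𝕜 := ℂ) (x (T ξ)) (η : H) : ℂ)‖₊ : ℝ≥0∞)

section Aux

open scoped InnerProductSpace

variable {H : Type*} [NormedAddCommGroup H] [InnerProductSpace ℂ H] [CompleteSpace H]

/-- The sesquilinear form appearing in `Lsem`. -/
noncomputable def Bf (T : H →ₗ.[ℂ] H) (x : H →L[ℂ] H) (ξ η : T.domain) : ℂ :=
  (inner (𝕜 := ℂ) (ξ : H) ((star x) (T η)) : ℂ) - (inner (𝕜 := ℂ) (x (T ξ)) (η : H) : ℂ)

lemma Lsem_eq_Bf (T : H →ₗ.[ℂ] H) (x : H →L[ℂ] H) :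
    Lsem T x = ⨆ (ξ : T.domain) (_ : ‖(ξ : H)‖ = 1) (η : T.domain) (_ : ‖(η : H)‖ = 1),
      (‖Bf T x ξ η‖₊ : ℝ≥0∞) := rfl

lemma Bf_alt (T : H →ₗ.[ℂ] H) (x : H →L[ℂ] H) (ξ η : T.domain) :
    Bf T x ξ η = (inner (𝕜 := ℂ) (x (ξ : H)) ((T η : H)) : ℂ)
      - (inner (𝕜 := ℂ) (x (T ξ)) (η : H) : ℂ) := by
  unfold Bf
  rw [ContinuousLinearMap.star_eq_adjoint, ContinuousLinearMap.adjoint_inner_right]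

lemma Bf_smul_left (T : H →ₗ.[ℂ] H) (x : H →L[ℂ] H) (c : ℂ) (ξ η : T.domain) :
    Bf T x (c • ξ) η = starRingEnd ℂ c * Bf T x ξ η := by
  simp only [Bf, Submodule.coe_smul, T.map_smul, map_smul, inner_smul_left,
    ContinuousLinearMap.map_smul, mul_sub]

lemma Bf_smul_right (T : H →ₗ.[ℂ] H) (x : H →L[ℂ] H) (c : ℂ) (ξ η : T.domain) :
    Bf T x ξ (c • η) = c * Bf T x ξ η := by
  simp only [Bf, Submodule.coe_smul, T.map_smul, map_smul, inner_smul_right,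
    ContinuousLinearMap.map_smul, mul_sub]

lemma Bf_zero_left (T : H →ₗ.[ℂ] H) (x : H →L[ℂ] H) (η : T.domain) :
    Bf T x 0 η = 0 := by
  simp [Bf]

lemma Bf_zero_right (T : H →ₗ.[ℂ] H) (x : H →L[ℂ] H) (ξ : T.domain) :
    Bf T x ξ 0 = 0 := by
  simp [Bf]

/-- Scaling: a bound on unit vectors yields the sesquilinear bound. -/
lemma Bf_bound (T : H →ₗ.[ℂ] H) (x : H →L[ℂ] H) (C : ℝ) (hC : 0 ≤ C)
    (h : ∀ ξ : T.domain, ‖(ξ : H)‖ = 1 → ∀ η : T.domain, ‖(η : H)‖ = 1 → ‖Bf T x ξ η‖ ≤ C) :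
    ∀ ξ η : T.domain, ‖Bf T x ξ η‖ ≤ C * ‖(ξ : H)‖ * ‖(η : H)‖ := by
  intro ξ η
  rcases eq_or_ne ξ 0 with rfl | hξ
  · simp [Bf_zero_left, hC]
  rcases eq_or_ne η 0 with rfl | hη
  · simp [Bf_zero_right, hC]
  have ha : (0:ℝ) < ‖(ξ : H)‖ := by
    simpa using norm_pos_iff.mpr (by exact_mod_cast Subtype.coe_ne_coe.mpr hξ)
  have hb : (0:ℝ) < ‖(η : H)‖ := by
    simpa using norm_pos_iff.mpr (by exact_mod_cast Subtype.coe_ne_coe.mpr hη)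
  set a := ‖(ξ : H)‖
  set b := ‖(η : H)‖
  have h1 : ‖((((a:ℂ)⁻¹ • ξ : T.domain)) : H)‖ = 1 := by
    simp only [Submodule.coe_smul, norm_smul, norm_inv, Complex.norm_real]
    rw [Real.norm_eq_abs, abs_of_pos ha]
    field_simp
    rfl
  have h2 : ‖((((b:ℂ)⁻¹ • η : T.domain)) : H)‖ = 1 := by
    simp only [Submodule.coe_smul, norm_smul, norm_inv, Complex.norm_real]
    rw [Real.norm_eq_abs, abs_of_pos hb]
    field_simp
    rfl
  have := h _ h1 _ h2
  rw [Bf_smul_left, Bf_smul_right, norm_mul, norm_mul, RCLike.norm_conj] at this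
  have hna : ‖((a:ℝ):ℂ)⁻¹‖ = a⁻¹ := by
    rw [norm_inv, Complex.norm_real, Real.norm_eq_abs, abs_of_pos ha]
  have hnb : ‖((b:ℝ):ℂ)⁻¹‖ = b⁻¹ := by
    rw [norm_inv, Complex.norm_real, Real.norm_eq_abs, abs_of_pos hb]
  rw [hna, hnb] at this
  have h3 : ‖Bf T x ξ η‖ = a * b * (a⁻¹ * (b⁻¹ * ‖Bf T x ξ η‖)) := by
    field_simp
  rw [h3]
  calc a * b * (a⁻¹ * (b⁻¹ * ‖Bf T x ξ η‖)) ≤ a * b * C := by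
        apply mul_le_mul_of_nonneg_left this (by positivity)
    _ = C * a * b := by ring

/-- Density: a bound on inner products against a dense submodule gives a norm bound. -/
lemma norm_le_of_inner_dom_bound (p : Submodule ℂ H) (hdense : Dense (p : Set H))
    (v : H) (C : ℝ) (hC : 0 ≤ C)
    (h : ∀ η : p, ‖(inner (𝕜 := ℂ) v (η : H) : ℂ)‖ ≤ C * ‖(η : H)‖) : ‖v‖ ≤ C := by
  have hall : ∀ w : H, ‖(inner (𝕜 := ℂ) v w : ℂ)‖ ≤ C * ‖w‖ := by
    have hcl : IsClosed {w : H | ‖(inner (𝕜 := ℂ) v w : ℂ)‖ ≤ C * ‖w‖} := by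
      apply isClosed_le
      · exact (Continuous.inner continuous_const continuous_id).norm
      · exact continuous_const.mul continuous_norm
    intro w
    have hsub : (p : Set H) ⊆ {w : H | ‖(inner (𝕜 := ℂ) v w : ℂ)‖ ≤ C * ‖w‖} := by
      rintro w hw; exact h ⟨w, hw⟩
    have : closure (p : Set H) ⊆ {w : H | ‖(inner (𝕜 := ℂ) v w : ℂ)‖ ≤ C * ‖w‖} :=
      hcl.closure_subset_iff.mpr hsub
    exact this (by rw [hdense.closure_eq]; trivial)
  have hvv := hall v
  rw [inner_self_eq_norm_sq_to_K (𝕜 := ℂ) v] at hvv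
  have : ‖v‖ ^ 2 ≤ C * ‖v‖ := by
    calc ‖v‖ ^ 2 = ‖((‖v‖ : ℂ)) ^ 2‖ := by
          rw [norm_pow, Complex.norm_real, Real.norm_eq_abs, abs_of_nonneg (norm_nonneg v)]
      _ ≤ C * ‖v‖ := hvv
  rcases eq_or_lt_of_le (norm_nonneg v) with h0 | h0
  · rw [← h0]; exact hC
  · have : ‖v‖ * ‖v‖ ≤ C * ‖v‖ := by nlinarith
    exact le_of_mul_le_mul_right this h0

/-- Density: a bound on a continuous linear map on a dense submodule extends everywhere. -/
lemma clm_norm_le_of_dom_bound (p : Submodule ℂ H) (hdense : Dense (p : Set H))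
    (y : H →L[ℂ] H) (C : ℝ) (hC : 0 ≤ C)
    (h : ∀ ξ : p, ‖y (ξ : H)‖ ≤ C * ‖(ξ : H)‖) : ‖y‖ ≤ C := by
  refine y.opNorm_le_bound hC fun z => ?_
  have hcl : IsClosed {z : H | ‖y z‖ ≤ C * ‖z‖} := by
    apply isClosed_le
    · exact (y.continuous.norm)
    · exact continuous_const.mul continuous_norm
  have hsub : (p : Set H) ⊆ {z : H | ‖y z‖ ≤ C * ‖z‖} := by
    rintro w hw; exact h ⟨w, hw⟩
  have : closure (p : Set H) ⊆ {z : H | ‖y z‖ ≤ C * ‖z‖} := hcl.closure_subset_iff.mpr hsub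
  exact this (by rw [hdense.closure_eq]; trivial)

/-- Symmetry of a self-adjoint `LinearPMap`. -/
lemma pmap_symm (T : H →ₗ.[ℂ] H) (hdense : Dense (T.domain : Set H)) (hsa : IsSelfAdjoint T) :
    ∀ u v : T.domain, (inner (𝕜 := ℂ) ((T u : H)) (v : H) : ℂ) = inner (𝕜 := ℂ) (u : H) (T v) := by
  intro u v
  have heq : T.adjoint = T := LinearPMap.isSelfAdjoint_def.mp hsa
  have hle : T ≤ T.adjoint := heq.ge
  have hmem : (u : H) ∈ T.adjoint.domain := hle.1 u.2
  have happ : T u = T.adjoint ⟨(u : H), hmem⟩ := hle.2 rfl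
  have hfa := LinearPMap.adjoint_isFormalAdjoint hdense (T := T) ⟨(u : H), hmem⟩ v
  rw [happ]
  exact hfa

/-- Each term of the supremum is bounded by `Lsem`. -/
lemma le_Lsem (T : H →ₗ.[ℂ] H) (x : H →L[ℂ] H) (ξ : T.domain) (hξ : ‖(ξ : H)‖ = 1)
    (η : T.domain) (hη : ‖(η : H)‖ = 1) : (‖Bf T x ξ η‖₊ : ℝ≥0∞) ≤ Lsem T x := by
  rw [Lsem_eq_Bf]
  exact le_iSup_of_le ξ (le_iSup_of_le hξ (le_iSup_of_le η (le_iSup_of_le hη le_rfl)))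

end Aux

/-- For a densely defined self-adjoint operator `T` on a complex Hilbert space and
a bounded operator `x`, `L(x) < ∞` iff `x` preserves `Dom T` and the commutator
`ξ ↦ T(xξ) − x(Tξ)` admits a bounded extension `y`; in that case `L(x) = ‖y‖`. -/
theorem stmt0 {H : Type*} [NormedAddCommGroup H] [InnerProductSpace ℂ H] [CompleteSpace H]
    (T : H →ₗ.[ℂ] H) (hdense : Dense (T.domain : Set H)) (hsa : IsSelfAdjoint T)
    (x : H →L[ℂ] H) :
    (Lsem T x < ⊤ ↔
      ∃ h : ∀ ξ : T.domain, x (ξ : H) ∈ T.domain,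
        ∃ y : H →L[ℂ] H, ∀ ξ : T.domain, y (ξ : H) = T ⟨x (ξ : H), h ξ⟩ - x (T ξ)) ∧
    (∀ (h : ∀ ξ : T.domain, x (ξ : H) ∈ T.domain) (y : H →L[ℂ] H),
      (∀ ξ : T.domain, y (ξ : H) = T ⟨x (ξ : H), h ξ⟩ - x (T ξ)) →
        Lsem T x = (‖y‖₊ : ℝ≥0∞)) := by
  have hsymm := pmap_symm T hdense hsa
  -- Part 2 first
  have part2 : ∀ (h : ∀ ξ : T.domain, x (ξ : H) ∈ T.domain) (y : H →L[ℂ] H),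
      (∀ ξ : T.domain, y (ξ : H) = T ⟨x (ξ : H), h ξ⟩ - x (T ξ)) →
        Lsem T x = (‖y‖₊ : ℝ≥0∞) := by
    intro h y hy
    have key : ∀ ξ η : T.domain, Bf T x ξ η = inner (𝕜 := ℂ) (y (ξ : H)) (η : H) := by
      intro ξ η
      rw [Bf_alt, hy ξ, inner_sub_left]
      congr 1
      exact (hsymm ⟨x (ξ : H), h ξ⟩ η).symm
    -- ≤ direction
    have hle1 : Lsem T x ≤ (‖y‖₊ : ℝ≥0∞) := by
      rw [Lsem_eq_Bf]
      refine iSup_le fun ξ => iSup_le fun hξ => iSup_le fun η => iSup_le fun hη => ?_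
      rw [ENNReal.coe_le_coe, ← NNReal.coe_le_coe, coe_nnnorm, coe_nnnorm]
      calc ‖Bf T x ξ η‖ = ‖(inner (𝕜 := ℂ) (y (ξ : H)) (η : H) : ℂ)‖ := by rw [key]
        _ ≤ ‖y (ξ : H)‖ * ‖(η : H)‖ := norm_inner_le_norm _ _
        _ ≤ (‖y‖ * ‖(ξ : H)‖) * ‖(η : H)‖ := by
            exact mul_le_mul_of_nonneg_right (y.le_opNorm _) (norm_nonneg _)
        _ = ‖y‖ := by rw [hξ, hη]; ring
    -- ≥ direction
    have hle2 : (‖y‖₊ : ℝ≥0∞) ≤ Lsem T x := by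
      rcases eq_or_ne (Lsem T x) ⊤ with htop | htop
      · rw [htop]; exact le_top
      set C : NNReal := (Lsem T x).toNNReal with hCdef
      have hCoe : (C : ℝ≥0∞) = Lsem T x := ENNReal.coe_toNNReal htop
      have hunit : ∀ ξ : T.domain, ‖(ξ : H)‖ = 1 → ∀ η : T.domain, ‖(η : H)‖ = 1 →
          ‖Bf T x ξ η‖ ≤ (C : ℝ) := by
        intro ξ hξ η hη
        have := le_Lsem T x ξ hξ η hη
        rw [← hCoe, ENNReal.coe_le_coe, ← NNReal.coe_le_coe, coe_nnnorm] at this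
        exact this
      have hbil := Bf_bound T x (C : ℝ) C.coe_nonneg hunit
      have hyb : ∀ ξ : T.domain, ‖y (ξ : H)‖ ≤ (C : ℝ) * ‖(ξ : H)‖ := by
        intro ξ
        refine norm_le_of_inner_dom_bound T.domain hdense (y (ξ : H)) ((C : ℝ) * ‖(ξ : H)‖)
          (by positivity) fun η => ?_
        calc ‖(inner (𝕜 := ℂ) (y (ξ : H)) (η : H) : ℂ)‖ = ‖Bf T x ξ η‖ := by rw [key]
          _ ≤ (C : ℝ) * ‖(ξ : H)‖ * ‖(η : H)‖ := hbil ξ η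
      have : ‖y‖ ≤ (C : ℝ) := clm_norm_le_of_dom_bound T.domain hdense y _ C.coe_nonneg hyb
      rw [← hCoe, ENNReal.coe_le_coe]
      exact this
    exact le_antisymm hle1 hle2
  refine ⟨⟨fun hfin => ?_, fun ⟨h, y, hy⟩ => by rw [part2 h y hy]; exact ENNReal.coe_lt_top⟩,
    part2⟩
  -- Forward direction
  set C : NNReal := (Lsem T x).toNNReal with hCdef
  have hCoe : (C : ℝ≥0∞) = Lsem T x := ENNReal.coe_toNNReal hfin.ne
  have hunit : ∀ ξ : T.domain, ‖(ξ : H)‖ = 1 → ∀ η : T.domain, ‖(η : H)‖ = 1 →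
      ‖Bf T x ξ η‖ ≤ (C : ℝ) := by
    intro ξ hξ η hη
    have := le_Lsem T x ξ hξ η hη
    rw [← hCoe, ENNReal.coe_le_coe, ← NNReal.coe_le_coe, coe_nnnorm] at this
    exact this
  have hbil := Bf_bound T x (C : ℝ) C.coe_nonneg hunit
  -- x preserves the domain
  have hmem : ∀ ξ : T.domain, x (ξ : H) ∈ T.domain := by
    intro ξ
    have hmem' : x (ξ : H) ∈ T.adjoint.domain := by
      rw [LinearPMap.mem_adjoint_domain_iff]
      refine AddMonoidHomClass.continuous_of_bound ((innerₛₗ ℂ (x (ξ : H))).comp T.toFun) ((C : ℝ) * ‖(ξ : H)‖ + ‖x (T ξ)‖) fun η => ?_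
      have hdec : (inner (𝕜 := ℂ) (x (ξ : H)) ((T η : H)) : ℂ)
          = Bf T x ξ η + inner (𝕜 := ℂ) (x (T ξ)) (η : H) := by
        rw [Bf_alt]; ring
      calc ‖((innerₛₗ ℂ (x (ξ : H))).comp T.toFun) η‖
          = ‖(inner (𝕜 := ℂ) (x (ξ : H)) ((T η : H)) : ℂ)‖ := rfl
        _ = ‖Bf T x ξ η + (inner (𝕜 := ℂ) (x (T ξ)) (η : H) : ℂ)‖ := by rw [hdec]
        _ ≤ ‖Bf T x ξ η‖ + ‖(inner (𝕜 := ℂ) (x (T ξ)) (η : H) : ℂ)‖ := norm_add_le _ _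
        _ ≤ (C : ℝ) * ‖(ξ : H)‖ * ‖(η : H)‖ + ‖x (T ξ)‖ * ‖(η : H)‖ :=
            add_le_add (hbil ξ η) (norm_inner_le_norm _ _)
        _ = ((C : ℝ) * ‖(ξ : H)‖ + ‖x (T ξ)‖) * ‖(η : H)‖ := by ring
    have hd : T.adjoint.domain = T.domain := by
      rw [LinearPMap.isSelfAdjoint_def.mp hsa]
    have hiff : (x (ξ : H) ∈ T.adjoint.domain) = (x (ξ : H) ∈ T.domain) :=
      congrArg (fun s : Submodule ℂ H => x (ξ : H) ∈ s) hd
    exact hiff ▸ hmem'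
  refine ⟨hmem, ?_⟩
  -- the commutator as a linear map on the domain
  let g : T.domain →ₗ[ℂ] T.domain :=
    LinearMap.codRestrict T.domain ((x : H →ₗ[ℂ] H).comp T.domain.subtype) hmem
  let S : T.domain →ₗ[ℂ] H := T.toFun.comp g - (x : H →ₗ[ℂ] H).comp T.toFun
  have hSapp : ∀ ξ : T.domain, S ξ = T ⟨x (ξ : H), hmem ξ⟩ - x (T ξ) := fun ξ => rfl
  have hSinner : ∀ ξ η : T.domain, (inner (𝕜 := ℂ) (S ξ) (η : H) : ℂ) = Bf T x ξ η := by
    intro ξ η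
    rw [hSapp, inner_sub_left, Bf_alt]
    congr 1
    exact hsymm ⟨x (ξ : H), hmem ξ⟩ η
  have hSbound : ∀ ξ : T.domain, ‖S ξ‖ ≤ (C : ℝ) * ‖ξ‖ := by
    intro ξ
    refine norm_le_of_inner_dom_bound T.domain hdense (S ξ) ((C : ℝ) * ‖ξ‖)
      (by positivity) fun η => ?_
    calc ‖(inner (𝕜 := ℂ) (S ξ) (η : H) : ℂ)‖ = ‖Bf T x ξ η‖ := by rw [hSinner]
      _ ≤ (C : ℝ) * ‖(ξ : H)‖ * ‖(η : H)‖ := hbil ξ η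
      _ = (C : ℝ) * ‖ξ‖ * ‖(η : H)‖ := rfl
  let Sc : T.domain →L[ℂ] H := S.mkContinuous (C : ℝ) hSbound
  let y : H →L[ℂ] H := Sc.extend T.domain.subtypeL
  refine ⟨y, fun ξ => ?_⟩
  have : y (T.domain.subtypeL ξ) = Sc ξ := ContinuousLinearMap.extend_eq (f := Sc) (e := T.domain.subtypeL) hdense.denseRange_val
    isUniformEmbedding_subtype_val.isUniformInducing ξ
  simpa [Sc, hSapp ξ] using this
end

section
/- For every k ∈ ℕ, the indicator function projection χ_{\{q^{2k}\}}(A) is the norm limit, as n → ∞, of q^{−2kn} Aⁿ − Σ_{j=1}^{k} q^{−2jn} χ_{\{q^{2(k−j)}\}}(A); that is, ‖ χ_{\{q^{2k}\}}(A) − ( q^{−2kn} Aⁿ − Σ_{j=1}^{k} q^{−2jn} χ_{\{q^{2(k−j)}\}}(A) ) ‖ → 0 as n → ∞. -/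
open Filter Finset

/-- If `A` is a selfadjoint element of a unital C*-algebra with spectrum contained in
`{0} ∪ {q^{2k} : k ∈ ℕ}`, then for every `k`, the spectral projection `χ_{{q^{2k}}}(A)` is the
norm limit of `q^{−2kn} Aⁿ − Σ_{j=1}^{k} q^{−2jn} χ_{{q^{2(k−j)}}}(A)` as `n → ∞`. -/
theorem stmt4 {𝒜 : Type*} [CStarAlgebra 𝒜]
    (q : ℝ) (hq : q ∈ Set.Ioo (0 : ℝ) 1)
    (A : 𝒜) (hA : IsSelfAdjoint A)
    (hspec : spectrum ℝ A ⊆ {0} ∪ Set.range (fun k : ℕ => q ^ (2 * k)))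
    (k : ℕ) :
    Filter.Tendsto (fun n : ℕ =>
      ‖cfc (fun t : ℝ => if t = q ^ (2 * k) then (1 : ℝ) else 0) A -
        ((((q ^ (2 * k * n) : ℝ)⁻¹ : ℝ) : ℂ) • A ^ n -
          ∑ j ∈ Finset.Icc 1 k, (((q ^ (2 * j * n) : ℝ)⁻¹ : ℝ) : ℂ) •
            cfc (fun t : ℝ => if t = q ^ (2 * (k - j)) then (1 : ℝ) else 0) A)‖)
      Filter.atTop (nhds 0) := by
  obtain ⟨hq0, hq1⟩ := hq
  have hqpow : ∀ m : ℕ, (0 : ℝ) < q ^ m := fun m => pow_pos hq0 m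
  have hSA : StrictAnti (q ^ · : ℕ → ℝ) := pow_right_strictAnti₀ hq0 hq1
  have hq2 : q ^ 2 < 1 := by nlinarith
  have hinj : ∀ a b : ℕ, q ^ (2 * a) = q ^ (2 * b) → a = b := by
    intro a b h
    have := hSA.injective h
    omega
  -- isolation of each point q^(2m) within the allowed spectrum set
  have hiso : ∀ m : ℕ, ∃ ε > (0:ℝ), ∀ t ∈ ({0} ∪ Set.range (fun j : ℕ => q ^ (2 * j)) : Set ℝ),
      |t - q ^ (2 * m)| < ε → t = q ^ (2 * m) := by
    intro m
    refine ⟨q ^ (2 * m) * (1 - q ^ 2), mul_pos (hqpow (2 * m)) (by linarith), ?_⟩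
    rintro t (rfl | ⟨j, rfl⟩) h
    · exfalso
      rw [abs_lt] at h
      nlinarith [hqpow (2 * m), sq_nonneg q]
    · simp only at h ⊢
      rcases lt_trichotomy j m with hjm | rfl | hmj
      · exfalso
        have h1 : q ^ (2 * m) ≤ q ^ (2 * j) * q ^ 2 := by
          rw [← pow_add]
          exact hSA.antitone (by omega)
        have h2 : q ^ (2 * m) ≤ q ^ (2 * j) := hSA.antitone (by omega)
        rw [abs_lt] at h
        nlinarith [mul_lt_mul_of_pos_right h.2 (hqpow 2), hqpow (2 * m), hqpow (2 * j)]
      · rfl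
      · exfalso
        have h1 : q ^ (2 * j) ≤ q ^ (2 * m) * q ^ 2 := by
          rw [← pow_add]
          exact hSA.antitone (by omega)
        rw [abs_lt] at h
        nlinarith [hqpow (2 * j)]
  -- continuity of indicators on the spectrum
  have hcont : ∀ m : ℕ,
      ContinuousOn (fun t : ℝ => if t = q ^ (2 * m) then (1:ℝ) else 0) (spectrum ℝ A) := by
    intro m t ht
    by_cases htc : t = q ^ (2 * m)
    · subst htc
      obtain ⟨ε, hε, hiso'⟩ := hiso m
      refine ContinuousWithinAt.congr_of_eventuallyEq (f := fun _ => (1:ℝ))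
        continuousWithinAt_const ?_ (by simp)
      rw [Filter.EventuallyEq, eventually_nhdsWithin_iff]
      rw [Metric.eventually_nhds_iff]
      refine ⟨ε, hε, fun y hy hyS => ?_⟩
      rw [Real.dist_eq] at hy
      rw [if_pos (hiso' y (hspec hyS) hy)]
    · have hev : ∀ᶠ x in nhds t, x ∈ ({q ^ (2 * m)}ᶜ : Set ℝ) :=
        isOpen_compl_singleton.eventually_mem htc
      have : (fun x : ℝ => if x = q ^ (2 * m) then (1:ℝ) else 0) =ᶠ[nhds t] fun _ => (0:ℝ) := by
        filter_upwards [hev] with x hx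
        simp [Set.mem_compl_iff, Set.mem_singleton_iff] at hx
        rw [if_neg hx]
      exact (continuousAt_const.congr this.symm).continuousWithinAt
  -- the element under the norm equals cfc of an explicit function
  have helt : ∀ n : ℕ,
      cfc (fun t : ℝ => if t = q ^ (2 * k) then (1 : ℝ) else 0) A -
        ((((q ^ (2 * k * n) : ℝ)⁻¹ : ℝ) : ℂ) • A ^ n -
          ∑ j ∈ Finset.Icc 1 k, (((q ^ (2 * j * n) : ℝ)⁻¹ : ℝ) : ℂ) •
            cfc (fun t : ℝ => if t = q ^ (2 * (k - j)) then (1 : ℝ) else 0) A)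
      = cfc (fun t : ℝ => (if t = q ^ (2 * k) then (1 : ℝ) else 0) -
          ((q ^ (2 * k * n) : ℝ)⁻¹ * t ^ n -
            ∑ j ∈ Finset.Icc 1 k, (q ^ (2 * j * n) : ℝ)⁻¹ *
              (if t = q ^ (2 * (k - j)) then (1 : ℝ) else 0))) A := by
    intro n
    have h1 : (((q ^ (2 * k * n) : ℝ)⁻¹ : ℝ) : ℂ) • A ^ n
        = cfc (fun t : ℝ => (q ^ (2 * k * n) : ℝ)⁻¹ * t ^ n) A := by
      rw [Complex.coe_smul, ← cfc_pow_id (R := ℝ) A n hA,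
        ← cfc_const_mul _ _ A (by fun_prop)]
    have h2 : ∀ j : ℕ, (((q ^ (2 * j * n) : ℝ)⁻¹ : ℝ) : ℂ) •
        cfc (fun t : ℝ => if t = q ^ (2 * (k - j)) then (1 : ℝ) else 0) A
        = cfc (fun t : ℝ => (q ^ (2 * j * n) : ℝ)⁻¹ *
            (if t = q ^ (2 * (k - j)) then (1 : ℝ) else 0)) A := by
      intro j
      rw [Complex.coe_smul, ← cfc_const_mul _ _ A (hcont (k - j))]
    have h3 : ∑ j ∈ Finset.Icc 1 k, (((q ^ (2 * j * n) : ℝ)⁻¹ : ℝ) : ℂ) •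
        cfc (fun t : ℝ => if t = q ^ (2 * (k - j)) then (1 : ℝ) else 0) A
        = cfc (fun t : ℝ => ∑ j ∈ Finset.Icc 1 k, (q ^ (2 * j * n) : ℝ)⁻¹ *
            (if t = q ^ (2 * (k - j)) then (1 : ℝ) else 0)) A := by
      rw [Finset.sum_congr rfl (fun j _ => h2 j)]
      rw [← cfc_sum _ A _ (fun j _ => continuousOn_const.fun_mul (hcont (k - j)))]
      congr 1
      ext t
      simp [Finset.sum_apply]
    rw [h1, h3, ← cfc_sub _ _ A
      (continuousOn_const.fun_mul (by fun_prop))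
      (continuousOn_finset_sum _ (fun j _ => continuousOn_const.fun_mul (hcont (k - j)))),
      ← cfc_sub _ _ A (hcont k)
      ((continuousOn_const.fun_mul (by fun_prop)).fun_sub
        (continuousOn_finset_sum _ (fun j _ => continuousOn_const.fun_mul (hcont (k - j)))))]
  -- pointwise bound on the spectrum
  have hval : ∀ n : ℕ, 1 ≤ n → ∀ t ∈ spectrum ℝ A,
      |(if t = q ^ (2 * k) then (1 : ℝ) else 0) -
          ((q ^ (2 * k * n) : ℝ)⁻¹ * t ^ n -
            ∑ j ∈ Finset.Icc 1 k, (q ^ (2 * j * n) : ℝ)⁻¹ *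
              (if t = q ^ (2 * (k - j)) then (1 : ℝ) else 0))| ≤ (q ^ 2) ^ n := by
    intro n hn t ht
    have hne0 : ∀ m : ℕ, (0:ℝ) ≠ q ^ m := fun m => (hqpow m).ne
    rcases hspec ht with h0 | ⟨m, hm⟩
    · rw [Set.mem_singleton_iff] at h0
      subst h0
      rw [if_neg (hne0 _), zero_pow (by omega : n ≠ 0), mul_zero,
        Finset.sum_eq_zero (fun j _ => by rw [if_neg (hne0 _), mul_zero])]
      simp [le_of_lt (pow_pos (pow_pos hq0 2) n)]
    · simp only at hm
      subst hm
      have hsum : ∑ j ∈ Finset.Icc 1 k, (q ^ (2 * j * n) : ℝ)⁻¹ *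
          (if q ^ (2 * m) = q ^ (2 * (k - j)) then (1 : ℝ) else 0)
          = if m < k then (q ^ (2 * (k - m) * n) : ℝ)⁻¹ else 0 := by
        by_cases hmk : m < k
        · rw [if_pos hmk, Finset.sum_eq_single (k - m)]
          · rw [if_pos (by rw [Nat.sub_sub_self hmk.le]), mul_one]
          · intro j hj hne
            rw [Finset.mem_Icc] at hj
            rw [if_neg, mul_zero]
            intro hh
            have := hinj _ _ hh
            omega
          · intro h
            exact absurd (Finset.mem_Icc.mpr ⟨by omega, by omega⟩) h
        · rw [if_neg hmk, Finset.sum_eq_zero]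
          intro j hj
          rw [Finset.mem_Icc] at hj
          rw [if_neg, mul_zero]
          intro hh
          have := hinj _ _ hh
          omega
      rw [hsum]
      have hpn : (q ^ (2 * m)) ^ n = q ^ (2 * m * n) := (pow_mul q (2 * m) n).symm
      rcases lt_trichotomy m k with hlt | heq | hgt
      · rw [if_neg (fun hh => absurd (hinj _ _ hh) hlt.ne), if_pos hlt, hpn]
        have e1 : (q ^ (2 * k * n) : ℝ)⁻¹ * q ^ (2 * m * n) = (q ^ (2 * (k - m) * n) : ℝ)⁻¹ := by
          rw [inv_mul_eq_iff_eq_mul₀ (pow_ne_zero _ hq0.ne'), eq_comm,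
            mul_inv_eq_iff_eq_mul₀ (pow_ne_zero _ hq0.ne'), ← pow_add, ← add_mul]
          congr 2
          omega
        rw [e1]
        simp [le_of_lt (pow_pos (pow_pos hq0 2) n)]
      · subst heq
        rw [if_pos rfl, if_neg (lt_irrefl m), hpn, inv_mul_cancel₀ (pow_ne_zero _ hq0.ne')]
        simp [le_of_lt (pow_pos (pow_pos hq0 2) n)]
      · rw [if_neg (fun hh => absurd (hinj _ _ hh) hgt.ne'), if_neg (by omega), hpn]
        have e1 : (q ^ (2 * k * n) : ℝ)⁻¹ * q ^ (2 * m * n) = q ^ (2 * (m - k) * n) := by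
          rw [inv_mul_eq_iff_eq_mul₀ (pow_ne_zero _ hq0.ne'), ← pow_add, ← add_mul]
          congr 2
          omega
        rw [e1, sub_zero, zero_sub, abs_neg, abs_of_pos (hqpow _), ← pow_mul]
        exact hSA.antitone (Nat.mul_le_mul_right n (by omega : 2 ≤ 2 * (m - k)))
  -- conclude
  have hbound : ∀ n : ℕ, 1 ≤ n →
      ‖cfc (fun t : ℝ => if t = q ^ (2 * k) then (1 : ℝ) else 0) A -
        ((((q ^ (2 * k * n) : ℝ)⁻¹ : ℝ) : ℂ) • A ^ n -
          ∑ j ∈ Finset.Icc 1 k, (((q ^ (2 * j * n) : ℝ)⁻¹ : ℝ) : ℂ) •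
            cfc (fun t : ℝ => if t = q ^ (2 * (k - j)) then (1 : ℝ) else 0) A)‖
        ≤ (q ^ 2) ^ n := by
    intro n hn
    rw [helt n]
    refine norm_cfc_le (by positivity) fun t ht => ?_
    rw [Real.norm_eq_abs]
    exact hval n hn t ht
  refine squeeze_zero' (Filter.Eventually.of_forall fun n => norm_nonneg _)
    (Filter.eventually_atTop.mpr ⟨1, fun n hn => hbound n hn⟩) ?_
  exact tendsto_pow_atTop_nhds_zero_of_lt_one (by positivity) (by nlinarith)
end

section
/- Set A := b*b and assume that the spectrum of A is contained in {0} ∪ { q^{2k} : k ∈ ℕ }. Then for every k ∈ ℕ: χ_{\{q^{2k}\}}(A) · a* = a* · χ_{\{q^{2(k+1)}\}}(A). -/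
open Pointwise

section Aux

variable {𝒜 : Type*}

lemma inter_pow [Ring 𝒜] {x y u : 𝒜} (h : u * x = y * u) :
    ∀ n : ℕ, u * x ^ n = y ^ n * u := by
  intro n
  induction n with
  | zero => simp
  | succ n ih =>
    rw [pow_succ, pow_succ, ← mul_assoc, ih, mul_assoc, h, ← mul_assoc]

lemma inter_poly [Ring 𝒜] [Algebra ℝ 𝒜] {x y u : 𝒜} (h : u * x = y * u) (p : Polynomial ℝ) :
    u * Polynomial.aeval x p = Polynomial.aeval y p * u := by
  induction p using Polynomial.induction_on with
  | C r => simp [Algebra.commutes]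
  | add p q hp hq => simp [mul_add, add_mul, hp, hq]
  | monomial n r _ =>
    simp only [map_mul, map_pow, Polynomial.aeval_C, Polynomial.aeval_X]
    calc u * (algebraMap ℝ 𝒜 r * x ^ (n + 1))
        = algebraMap ℝ 𝒜 r * (u * x ^ (n + 1)) := by
          rw [← mul_assoc, ← Algebra.commutes, mul_assoc]
      _ = algebraMap ℝ 𝒜 r * (y ^ (n + 1) * u) := by rw [inter_pow h]
      _ = algebraMap ℝ 𝒜 r * y ^ (n + 1) * u := by rw [mul_assoc]

lemma intertwine_cfc [CStarAlgebra 𝒜] {x y u : 𝒜} (hx : IsSelfAdjoint x)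
    (hy : IsSelfAdjoint y) (h : u * x = y * u) (f : ℝ → ℝ)
    (hf : ContinuousOn f (spectrum ℝ x ∪ spectrum ℝ y)) :
    u * cfc f x = cfc f y * u := by
  set K : Set ℝ := spectrum ℝ x ∪ spectrum ℝ y with hK
  have hKc : IsCompact K := (spectrum.isCompact x).union (spectrum.isCompact y)
  haveI : CompactSpace K := isCompact_iff_compactSpace.mp hKc
  set F : C(K, ℝ) := ⟨K.restrict f, hf.restrict⟩ with hF
  have hFmem : F ∈ closure (polynomialFunctions K : Set C(K, ℝ)) := by
    have h1 := polynomialFunctions.topologicalClosure K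
    have h2 : F ∈ (polynomialFunctions K).topologicalClosure := h1 ▸ Algebra.mem_top
    exact h2
  have key : ∀ ε > (0 : ℝ), ‖u * cfc f x - cfc f y * u‖ ≤ 2 * ‖u‖ * ε := by
    intro ε hε
    obtain ⟨g, hgmem, hdist⟩ := Metric.mem_closure_iff.mp hFmem ε hε
    rw [polynomialFunctions_coe] at hgmem
    obtain ⟨p, rfl⟩ := hgmem
    have hbound : ∀ t ∈ K, |f t - p.eval t| ≤ ε := by
      intro t ht
      have := ContinuousMap.dist_apply_le_dist (f := F) (g := Polynomial.toContinuousMapOnAlgHom K p) ⟨t, ht⟩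
      have h2 : dist (F ⟨t, ht⟩) ((Polynomial.toContinuousMapOnAlgHom K p) ⟨t, ht⟩) ≤ ε :=
        this.trans hdist.le
      simp [Real.dist_eq, F, Polynomial.toContinuousMapOn, Polynomial.toContinuousMap] at h2; exact h2
    have hpx : ContinuousOn (fun t : ℝ => p.eval t) (spectrum ℝ x) :=
      p.continuous_aeval.continuousOn
    have hpy : ContinuousOn (fun t : ℝ => p.eval t) (spectrum ℝ y) :=
      p.continuous_aeval.continuousOn
    have hfx : ContinuousOn f (spectrum ℝ x) := hf.mono Set.subset_union_left
    have hfy : ContinuousOn f (spectrum ℝ y) := hf.mono Set.subset_union_right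
    have hmid : u * cfc (fun t : ℝ => p.eval t) x = cfc (fun t : ℝ => p.eval t) y * u := by
      rw [show (fun t : ℝ => p.eval t) = p.eval from rfl, cfc_polynomial p x hx,
        cfc_polynomial p y hy]
      exact inter_poly h p
    have hdecomp : u * cfc f x - cfc f y * u =
        u * (cfc f x - cfc (fun t : ℝ => p.eval t) x)
          + (cfc (fun t : ℝ => p.eval t) y - cfc f y) * u := by
      rw [mul_sub, sub_mul, hmid]
      abel
    have hnx : ‖cfc f x - cfc (fun t : ℝ => p.eval t) x‖ ≤ ε := by
      rw [← cfc_sub f (fun t : ℝ => p.eval t) x hfx hpx]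
      refine norm_cfc_le hε.le fun t ht => ?_
      simpa [Real.norm_eq_abs] using hbound t (Set.mem_union_left _ ht)
    have hny : ‖cfc (fun t : ℝ => p.eval t) y - cfc f y‖ ≤ ε := by
      rw [← cfc_sub (fun t : ℝ => p.eval t) f y hpy hfy]
      refine norm_cfc_le hε.le fun t ht => ?_
      rw [Real.norm_eq_abs, abs_sub_comm]
      exact hbound t (Set.mem_union_right _ ht)
    calc ‖u * cfc f x - cfc f y * u‖
        ≤ ‖u * (cfc f x - cfc (fun t : ℝ => p.eval t) x)‖
          + ‖(cfc (fun t : ℝ => p.eval t) y - cfc f y) * u‖ := by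
          rw [hdecomp]; exact norm_add_le _ _
      _ ≤ ‖u‖ * ε + ε * ‖u‖ :=
          add_le_add
            ((norm_mul_le _ _).trans (mul_le_mul_of_nonneg_left hnx (norm_nonneg u)))
            ((norm_mul_le _ _).trans (mul_le_mul_of_nonneg_right hny (norm_nonneg u)))
      _ = 2 * ‖u‖ * ε := by ring
  have hzero : ‖u * cfc f x - cfc f y * u‖ ≤ 0 := by
    refine le_of_forall_pos_le_add fun ε hε => ?_
    have h1 : (0:ℝ) < ε / (2 * ‖u‖ + 1) := by positivity
    have := key _ h1
    have h2 : 2 * ‖u‖ * (ε / (2 * ‖u‖ + 1)) ≤ ε := by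
      rw [div_eq_mul_inv, ← mul_assoc]
      rw [mul_inv_le_iff₀ (by positivity)]
      nlinarith [norm_nonneg u, hε.le]
    linarith
  have := le_antisymm hzero (norm_nonneg _)
  rw [norm_eq_zero] at this
  exact sub_eq_zero.mp this

lemma indicator_contOn (q : ℝ) (hq0 : 0 < q) (hq1 : q < 1) (m : ℕ) :
    ContinuousOn (fun t : ℝ => if t = q ^ (2 * m) then (1 : ℝ) else 0)
      ({0} ∪ Set.range fun j : ℕ => q ^ (2 * j)) := by
  set S : Set ℝ := {0} ∪ Set.range fun j : ℕ => q ^ (2 * j) with hS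
  set c : ℝ := q ^ (2 * m) with hc
  intro x hx
  by_cases hxc : x = c
  · -- near c, every point of S equals c
    have hcpos : 0 < c := pow_pos hq0 _
    have hq2 : 0 < q ^ 2 := pow_pos hq0 2
    have hq2lt : q ^ 2 < 1 := by nlinarith
    have hεpos : 0 < c - c * q ^ 2 := by nlinarith
    have hloc : ∀ y ∈ S, dist y x < c - c * q ^ 2 → y = c := by
      intro y hy hd
      rw [hxc, Real.dist_eq] at hd
      rcases hy with hy0 | ⟨j, rfl⟩
      · exfalso
        simp only [Set.mem_singleton_iff] at hy0
        subst hy0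
        rw [abs_of_nonpos (by linarith)] at hd
        nlinarith
      · rcases lt_trichotomy j m with hj | hj | hj
        · exfalso
          have h1 : q ^ (2 * m) ≤ q ^ (2 * j) * q ^ 2 := by
            rw [← pow_add]
            exact pow_le_pow_of_le_one hq0.le hq1.le (by omega)
          have h2 : q ^ (2 * m) ≤ q ^ (2 * j) :=
            pow_le_pow_of_le_one hq0.le hq1.le (by omega)
          rw [abs_of_nonneg (by simp only [hc]; linarith)] at hd
          have hjpos : 0 < q ^ (2 * j) := pow_pos hq0 _
          simp only [hc] at hd
          nlinarith
        · simp [hj, hc]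
        · exfalso
          have h1 : q ^ (2 * j) ≤ q ^ (2 * m) * q ^ 2 := by
            rw [← pow_add]
            exact pow_le_pow_of_le_one hq0.le hq1.le (by omega)
          rw [abs_of_nonpos (by simp only [hc]; nlinarith [pow_le_pow_of_le_one hq0.le hq1.le (show 2*m ≤ 2*j by omega)])] at hd
          simp only [hc] at hd
          nlinarith
    have hev : ∀ᶠ y in nhdsWithin x S,
        (fun _ : ℝ => if x = c then (1:ℝ) else 0) y
          = (fun t : ℝ => if t = c then (1:ℝ) else 0) y := by
      rw [eventually_nhdsWithin_iff]
      rw [Metric.eventually_nhds_iff]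
      exact ⟨c - c * q ^ 2, hεpos, fun y hdy hyS => by
        rw [hloc y hyS hdy, hxc]⟩
    exact (tendsto_const_nhds (x := if x = c then (1:ℝ) else 0)
      (f := nhdsWithin x S)).congr' hev
  · have hεpos : 0 < dist x c := dist_pos.mpr hxc
    have hev : ∀ᶠ y in nhdsWithin x S,
        (fun _ : ℝ => if x = c then (1:ℝ) else 0) y
          = (fun t : ℝ => if t = c then (1:ℝ) else 0) y := by
      rw [eventually_nhdsWithin_iff, Metric.eventually_nhds_iff]
      refine ⟨dist x c, hεpos, fun y hdy _ => ?_⟩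
      have hyc : y ≠ c := by
        intro h
        subst h
        rw [dist_comm] at hdy
        exact lt_irrefl _ hdy
      simp [hxc, hyc]
    exact (tendsto_const_nhds (x := if x = c then (1:ℝ) else 0)
      (f := nhdsWithin x S)).congr' hev

end Aux

/-- In a unital C*-algebra with elements `a, b` satisfying the quantum SU(2)
relations, setting `A := b*b`, if the spectrum of `A` is contained in `{0} ∪ {q^{2k} : k ∈ ℕ}`
then `χ_{{q^{2k}}}(A) a* = a* χ_{{q^{2(k+1)}}}(A)` for every `k ∈ ℕ`. -/
theorem stmt6 {𝒜 : Type*} [CStarAlgebra 𝒜]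
    (q : ℝ) (hq : q ∈ Set.Ioo (0 : ℝ) 1) (a b : 𝒜)
    (h1 : b * a = (q : ℂ) • (a * b))
    (h2 : star b * a = (q : ℂ) • (a * star b))
    (h3 : b * star b = star b * b)
    (h4 : star a * a + ((q : ℂ) ^ 2) • (b * star b) = 1)
    (h5 : a * star a + b * star b = 1)
    (hspec : spectrum ℝ (star b * b) ⊆ {0} ∪ Set.range (fun k : ℕ => q ^ (2 * k))) :
    ∀ k : ℕ,
      cfc (fun t : ℝ => if t = q ^ (2 * k) then (1 : ℝ) else 0) (star b * b) * star a =
        star a * cfc (fun t : ℝ => if t = q ^ (2 * (k + 1)) then (1 : ℝ) else 0) (star b * b) := by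
  intro k
  obtain ⟨hq0, hq1⟩ := hq
  set A : 𝒜 := star b * b with hAdef
  have hA : IsSelfAdjoint A := IsSelfAdjoint.star_mul_self b
  set S : Set ℝ := {0} ∪ Set.range fun j : ℕ => q ^ (2 * j) with hSdef
  -- the commutation relation : A * a = q² • (a * A)
  have hAa : A * a = ((q : ℂ) ^ 2) • (a * A) := by
    calc A * a = star b * (b * a) := by rw [hAdef, mul_assoc]
      _ = star b * ((q : ℂ) • (a * b)) := by rw [h1]
      _ = (q : ℂ) • (star b * a * b) := by
          rw [mul_smul_comm]; rw [← mul_assoc]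
      _ = (q : ℂ) • (((q : ℂ) • (a * star b)) * b) := by rw [h2]
      _ = ((q : ℂ) ^ 2) • (a * A) := by
          rw [smul_mul_assoc, smul_smul, hAdef]
          ring_nf
          rw [mul_assoc]
  -- star: star a * A = q² • (A * star a)
  have haA : star a * A = ((q : ℂ) ^ 2) • (A * star a) := by
    have h' := congrArg star hAa
    simp only [star_mul, star_smul, star_star, star_pow, Complex.star_def,
      Complex.conj_ofReal, hA.star_eq, ← mul_assoc] at h'
    exact h'
  -- convert to real smul
  have haAr : star a * A = ((q ^ 2 : ℝ) • A) * star a := by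
    rw [smul_mul_assoc, haA]
    rw [show ((q : ℂ) ^ 2) = ((q ^ 2 : ℝ) : ℂ) by push_cast; ring]
    rw [show (((q ^ 2 : ℝ) : ℂ)) • (A * star a) = (q ^ 2 : ℝ) • (A * star a) by
      rw [← algebraMap_smul ℂ (q ^ 2 : ℝ) (A * star a)]; norm_num]
  have hy : IsSelfAdjoint ((q ^ 2 : ℝ) • A) := by
    have h' : (((q ^ 2 : ℝ) : ℂ)) • A = (q ^ 2 : ℝ) • A := by
      rw [← algebraMap_smul ℂ (q ^ 2 : ℝ) A, Complex.coe_algebraMap]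
    rw [← h']
    exact IsSelfAdjoint.smul (by simp [IsSelfAdjoint, Complex.star_def, Complex.conj_ofReal]) hA
  -- spectra are inside S
  have hq2ne : (q ^ 2 : ℝ) ≠ 0 := by positivity
  have hsmulS : ∀ s ∈ S, q ^ 2 * s ∈ S := by
    intro s hs
    rcases hs with hs0 | ⟨j, rfl⟩
    · simp only [Set.mem_singleton_iff] at hs0
      subst hs0
      exact Or.inl (by simp)
    · refine Or.inr ⟨j + 1, ?_⟩
      simp only
      ring
  have hspecy : spectrum ℝ ((q ^ 2 : ℝ) • A) ⊆ S := by
    have hu : spectrum ℝ ((Units.mk0 (q ^ 2 : ℝ) hq2ne) • A)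
        = (Units.mk0 (q ^ 2 : ℝ) hq2ne) • spectrum ℝ A :=
      spectrum.unit_smul_eq_smul A (Units.mk0 (q ^ 2 : ℝ) hq2ne)
    rw [show ((q ^ 2 : ℝ) • A) = (Units.mk0 (q ^ 2 : ℝ) hq2ne) • A from rfl, hu]
    rintro t ⟨s, hs, rfl⟩
    have hsS : s ∈ S := hspec hs
    simpa [Units.smul_def, smul_eq_mul] using hsmulS s hsS
  have hsub : spectrum ℝ A ∪ spectrum ℝ ((q ^ 2 : ℝ) • A) ⊆ S :=
    Set.union_subset hspec hspecy
  -- apply the intertwining lemma with f = indicator of {q^(2(k+1))}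
  have hcont := indicator_contOn q hq0 hq1 (k + 1)
  have hmain := intertwine_cfc hA hy haAr
    (fun t : ℝ => if t = q ^ (2 * (k + 1)) then (1 : ℝ) else 0)
    (hcont.mono hsub)
  -- rewrite cfc f (q² • A) as cfc (f ∘ (q² * ·)) A
  have himg : ContinuousOn (fun t : ℝ => if t = q ^ (2 * (k + 1)) then (1 : ℝ) else 0)
      (((q ^ 2 : ℝ) * ·) '' spectrum ℝ A) := by
    refine hcont.mono ?_
    rintro t ⟨s, hs, rfl⟩
    exact hsmulS s (hspec hs)
  have hcomp := cfc_comp_const_mul (q ^ 2 : ℝ)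
    (fun t : ℝ => if t = q ^ (2 * (k + 1)) then (1 : ℝ) else 0) A himg hA
  -- the composed function is the indicator of {q^(2k)}
  have hfun : (fun t : ℝ => if q ^ 2 * t = q ^ (2 * (k + 1)) then (1 : ℝ) else 0)
      = (fun t : ℝ => if t = q ^ (2 * k) then (1 : ℝ) else 0) := by
    funext t
    by_cases h : t = q ^ (2 * k)
    · subst h
      rw [if_pos rfl, if_pos (by ring)]
    · rw [if_neg h, if_neg ?_]
      intro he
      apply h
      have : q ^ 2 * t = q ^ 2 * q ^ (2 * k) := by rw [he]; ring
      exact mul_left_cancel₀ hq2ne this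
    -- done
  rw [← hcomp] at hmain
  rw [show (fun t : ℝ => (if q ^ 2 * t = q ^ (2 * (k + 1)) then (1 : ℝ) else 0))
      = (fun t : ℝ => if t = q ^ (2 * k) then (1 : ℝ) else 0) from hfun] at hmain
  exact hmain.symm
end

section
/- Let k ∈ ℕ. Every x ∈ 𝒟 ∩ Y_k with ‖∂(x)‖ ≤ 1 satisfies ‖x‖ ≤ q^k. That is, the set { x ∈ 𝒟 ∩ Y_k : ‖∂(x)‖ ≤ 1 } is norm-bounded by q^k. -/
set_option synthInstance.maxHeartbeats 1000000
set_option maxHeartbeats 1000000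
set_option linter.unusedSectionVars false

open scoped ComplexConjugate

section Helpers
variable {H : Type*} [NormedAddCommGroup H] [InnerProductSpace ℂ H] [CompleteSpace H]

local notation "⟪" x ", " y "⟫" => @inner ℂ _ _ x y

lemma podles_dense (e : HilbertBasis (ℕ × ℤ) ℂ H) :
    Dense (Submodule.span ℂ (Set.range e) : Set H) :=
  Submodule.dense_iff_topologicalClosure_eq_top.mpr e.dense_span

lemma podles_ext (e : HilbertBasis (ℕ × ℤ) ℂ H) {T S : H →L[ℂ] H}
    (h : ∀ (n : ℕ) (m : ℤ), T (e (n, m)) = S (e (n, m))) : T = S := by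
  refine ContinuousLinearMap.ext_on (podles_dense e) ?_
  rintro _ ⟨⟨n, m⟩, rfl⟩
  exact h n m

lemma podles_star_eq (e : HilbertBasis (ℕ × ℤ) ℂ H) {T : H →L[ℂ] H}
    (h : ∀ i j : ℕ × ℤ, ⟪T (e i), e j⟫ = ⟪e i, T (e j)⟫) : star T = T := by
  have stage1 : ∀ i : ℕ × ℤ, innerSL ℂ (T (e i)) = (innerSL ℂ (e i)).comp T := by
    intro i
    refine ContinuousLinearMap.ext_on (podles_dense e) ?_
    rintro _ ⟨j, rfl⟩
    simpa using h i j
  have stage1' : ∀ (i : ℕ × ℤ) (y : H), ⟪T (e i), y⟫ = ⟪e i, T y⟫ := by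
    intro i y
    have := congrFun (congrArg DFunLike.coe (stage1 i)) y
    simpa using this
  have stage2 : ∀ y : H, (innerSL ℂ y).comp T = innerSL ℂ (T y) := by
    intro y
    refine ContinuousLinearMap.ext_on (podles_dense e) ?_
    rintro _ ⟨i, rfl⟩
    have := congrArg (starRingEnd ℂ) (stage1' i y)
    simpa [inner_conj_symm] using this
  rw [ContinuousLinearMap.star_eq_adjoint]
  symm
  rw [ContinuousLinearMap.eq_adjoint_iff]
  intro x y
  have h2 := congrFun (congrArg DFunLike.coe (stage2 y)) x
  simp only [ContinuousLinearMap.comp_apply, innerSL_apply_apply] at h2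
  have := congrArg (starRingEnd ℂ) h2
  simpa [inner_conj_symm] using this

end Helpers

/-- The normalizing constants `C_{n,k}` of the matrix units of the Podleś sphere. -/
noncomputable def Cnk (q : ℝ) (n k : ℕ) : ℝ :=
  if k ≤ n then ∏ j ∈ Finset.Ico k n, q ^ (2 * j) * (1 - q ^ (2 * (j + 1)))
  else ∏ j ∈ Finset.Ico n k, q ^ (2 * j) * (1 - q ^ (2 * (j + 1)))

/-- Every `x ∈ 𝒟 ∩ Y_k` with `‖∂(x)‖ ≤ 1` satisfies `‖x‖ ≤ q^k`. -/
theorem stmt14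
    {H : Type*} [NormedAddCommGroup H] [InnerProductSpace ℂ H] [CompleteSpace H]
    (q : ℝ) (hq : q ∈ Set.Ioo (0 : ℝ) 1)
    (e : HilbertBasis (ℕ × ℤ) ℂ H)
    (a b : H →L[ℂ] H)
    (ha : ∀ (n : ℕ) (m : ℤ),
      a (e (n, m)) = ((Real.sqrt (1 - q ^ (2 * (n + 1))) : ℝ) : ℂ) • e (n + 1, m))
    (hb : ∀ (n : ℕ) (m : ℤ), b (e (n, m)) = ((q ^ n : ℝ) : ℂ) • e (n, m + 1))
    (has0 : ∀ m : ℤ, (star a) (e (0, m)) = 0)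
    (has : ∀ (n : ℕ) (m : ℤ),
      (star a) (e (n + 1, m)) = ((Real.sqrt (1 - q ^ (2 * (n + 1))) : ℝ) : ℂ) • e (n, m))
    (hbs : ∀ (n : ℕ) (m : ℤ), (star b) (e (n, m)) = ((q ^ n : ℝ) : ℂ) • e (n, m - 1))
    (A B : H →L[ℂ] H) (hA : A = star b * b) (hB : B = a * star b)
    (S : StarSubalgebra ℂ (H →L[ℂ] H))
    (hS : S = (StarAlgebra.adjoin ℂ ({A, B} : Set (H →L[ℂ] H))).topologicalClosure)
    (D : Subalgebra ℂ (H →L[ℂ] H)) (hDS : (D : Set (H →L[ℂ] H)) ⊆ (S : Set (H →L[ℂ] H)))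
    (hAD : A ∈ D) (hBD : B ∈ D) (hBsD : star B ∈ D)
    (δ : D →ₗ[ℂ] (H →L[ℂ] H))
    (hLeib : ∀ x y : D, δ (x * y) = δ x * (y : H →L[ℂ] H) + (x : H →L[ℂ] H) * δ y)
    (hδA : δ ⟨A, hAD⟩ = star b * star a)
    (hδB : δ ⟨B, hBD⟩ = -(star b) ^ 2)
    (hδBs : δ ⟨star B, hBsD⟩ = (((q : ℝ)⁻¹ : ℝ) : ℂ) • (star a) ^ 2)
    (hclosed : ∀ (u : ℕ → D) (x y : H →L[ℂ] H),
      Filter.Tendsto (fun j => (u j : H →L[ℂ] H)) Filter.atTop (nhds x) →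
      Filter.Tendsto (fun j => δ (u j)) Filter.atTop (nhds y) →
      ∃ hx : x ∈ D, δ ⟨x, hx⟩ = y)
    (P : ℕ → (H →L[ℂ] H))
    (hP : ∀ (k n : ℕ) (m : ℤ), (P k) (e (n, m)) = if n = k then e (n, m) else 0)
    (f : ℕ → ℕ → (H →L[ℂ] H))
    (hf : ∀ n k : ℕ, f n k =
      if k ≤ n then (((Real.sqrt (Cnk q n k))⁻¹ : ℝ) : ℂ) • (B ^ (n - k) * P k)
      else (((Real.sqrt (Cnk q n k))⁻¹ : ℝ) : ℂ) • ((star B) ^ (k - n) * P k))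
    :
    ∀ k : ℕ, ∀ x : H →L[ℂ] H, ∀ hx : x ∈ D,
      x ∈ (Submodule.span ℂ (Set.range fun n => f n k)).topologicalClosure →
      ‖δ ⟨x, hx⟩‖ ≤ 1 → ‖x‖ ≤ q ^ k := by
  classical
  obtain ⟨hq0, hq1⟩ := hq
  intro k x hx hxY hδ1
  have hqk : (0:ℝ) < q ^ k := pow_pos hq0 k
  have hq2k1 : q ^ (2*(k+1)) < 1 := pow_lt_one₀ hq0.le hq1 (by omega)
  have hs_pos : (0:ℝ) < 1 - q ^ (2*(k+1)) := by linarith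
  set s : ℝ := Real.sqrt (1 - q ^ (2*(k+1))) with hs_def
  have hs0 : 0 < s := Real.sqrt_pos.mpr hs_pos
  have hs2 : s ^ 2 = 1 - q ^ (2*(k+1)) := Real.sq_sqrt hs_pos.le
  set c : ℝ := q ^ k * s with hc_def
  have hc0 : 0 < c := mul_pos hqk hs0
  -- action of A on basis vectors
  have hAe : ∀ (n : ℕ) (m : ℤ), A (e (n, m)) = ((q ^ (2*n) : ℝ) : ℂ) • e (n, m) := by
    intro n m
    rw [hA, ContinuousLinearMap.mul_apply, hb n m, map_smul, hbs n (m+1)]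
    rw [smul_smul, ← Complex.ofReal_mul, ← pow_add]
    norm_num [two_mul]
  -- G1 : P k * A = q^{2k} • P k
  have hPA : P k * A = ((q ^ (2*k) : ℝ) : ℂ) • P k := by
    apply podles_ext e; intro n m
    simp only [ContinuousLinearMap.mul_apply, hAe, map_smul, hP,
      ContinuousLinearMap.smul_apply]
    by_cases h : n = k
    · subst h; simp
    · simp [h]
  -- G2 : P k is idempotent
  have hPP : P k * P k = P k := by
    apply podles_ext e; intro n m
    simp only [ContinuousLinearMap.mul_apply, hP]
    by_cases h : n = k <;> simp [h, hP]
  -- G3 : P k is self-adjoint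
  have hPstar : star (P k) = P k := by
    apply podles_star_eq e
    rintro ⟨n, m⟩ ⟨n', m'⟩
    have hee := orthonormal_iff_ite.mp e.orthonormal
    simp only [hP]
    by_cases h1 : n = k <;> by_cases h2 : n' = k <;>
      simp [h1, h2, hee, Prod.ext_iff] <;> (try intro h) <;> omega
  -- the operator T = a * b * P k on basis vectors
  have hTe : ∀ (n : ℕ) (m : ℤ), (a * b * P k) (e (n, m)) =
      if n = k then ((c : ℝ) : ℂ) • e (k+1, m+1) else 0 := by
    intro n m
    simp only [ContinuousLinearMap.mul_apply, hP]
    by_cases h : n = k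
    · rw [if_pos h, if_pos h, h, hb k m, map_smul, ha k (m+1), smul_smul,
        ← Complex.ofReal_mul]
    · simp [h]
  -- G4 : A * T = q^{2(k+1)} • T
  have hATe : A * (a * b * P k) = ((q ^ (2*(k+1)) : ℝ) : ℂ) • (a * b * P k) := by
    apply podles_ext e; intro n m
    by_cases h : n = k
    · simp only [ContinuousLinearMap.mul_apply, ContinuousLinearMap.smul_apply,
        hTe n m, if_pos h, map_smul, hAe (k+1) (m+1), smul_smul]
      congr 1
      push_cast
      ring
    · simp [ContinuousLinearMap.mul_apply, ContinuousLinearMap.smul_apply, hTe n m, h]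
  -- G5 : (b* a*) * T = c² • P k
  have hKey : (star b * star a) * (a * b * P k) = ((c ^ 2 : ℝ) : ℂ) • P k := by
    apply podles_ext e; intro n m
    by_cases h : n = k
    · simp only [ContinuousLinearMap.mul_apply, ContinuousLinearMap.smul_apply, hP, h,
        if_true, eq_self_iff_true]
      simp only [hb k m, map_smul, ha k (m+1), has k (m+1), hbs k (m+1), smul_smul,
        add_sub_cancel_right]
      congr 1
      rw [hc_def, hs_def]
      push_cast
      ring
    · simp [ContinuousLinearMap.mul_apply, ContinuousLinearMap.smul_apply, hP, h]
  -- x * A = q^{2k} • x  and  x * P k = x   (closed linear conditions)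
  have hmem : ∀ (R : H →L[ℂ] H) (w : H →L[ℂ] H) (cst : ℂ),
      (P k) * R = cst • (P k) → w ∈ (Submodule.span ℂ (Set.range fun n => f n k)).topologicalClosure →
      w * R = cst • w := by
    intro R w cst hPR hw
    set K : Submodule ℂ (H →L[ℂ] H) :=
      { carrier := {y | y * R = cst • y}
        add_mem' := by
          intro y z hy hz
          simp only [Set.mem_setOf_eq] at *
          rw [add_mul, hy, hz, smul_add]
        zero_mem' := by simp
        smul_mem' := by
          intro r y hy
          simp only [Set.mem_setOf_eq] at *
          rw [smul_mul_assoc, hy, smul_comm] } with hK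
    have hKc : IsClosed (K : Set (H →L[ℂ] H)) := by
      have : (K : Set (H →L[ℂ] H)) = {y | y * R = cst • y} := rfl
      rw [this]
      exact isClosed_eq (continuous_id.mul continuous_const) (continuous_const_smul cst)
    have hrange : Set.range (fun n => f n k) ⊆ (K : Set (H →L[ℂ] H)) := by
      rintro _ ⟨n, rfl⟩
      show f n k * R = cst • f n k
      rw [hf]
      split_ifs with h <;>
        rw [smul_mul_assoc, mul_assoc, hPR, mul_smul_comm, smul_comm]
    exact Submodule.topologicalClosure_minimal _ (Submodule.span_le.mpr hrange) hKc hw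
  have hxA : x * A = ((q ^ (2*k) : ℝ) : ℂ) • x := hmem A x _ hPA hxY
  have hxP : x * P k = x := by
    have := hmem (P k) x 1 (by rw [hPP, one_smul]) hxY
    rwa [one_smul] at this
  -- Leibniz identity
  set y : H →L[ℂ] H := δ ⟨x, hx⟩ with hy_def
  have hxAD : (⟨x, hx⟩ * ⟨A, hAD⟩ : D) = ((q ^ (2*k) : ℝ) : ℂ) • (⟨x, hx⟩ : D) := by
    apply Subtype.ext
    simpa using hxA
  have hE : ((q ^ (2*k) : ℝ) : ℂ) • y = y * A + x * (star b * star a) := by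
    have h1 := hLeib ⟨x, hx⟩ ⟨A, hAD⟩
    rw [hxAD, map_smul, hδA] at h1
    simpa [hy_def] using h1
  -- norm of T
  have hPn : ‖P k‖ ≤ 1 := by
    have h5 : ‖P k‖ * ‖P k‖ = ‖P k‖ := by
      rw [← CStarRing.norm_star_mul_self, hPstar, hPP]
    nlinarith [norm_nonneg (P k)]
  have hTsT : star (a * b * P k) * (a * b * P k) = ((c ^ 2 : ℝ) : ℂ) • P k := by
    rw [star_mul, star_mul, hPstar, mul_assoc, hKey, mul_smul_comm, hPP]
  have hTnorm : ‖a * b * P k‖ ≤ c := by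
    have h7 : ‖a * b * P k‖ * ‖a * b * P k‖ ≤ c ^ 2 := by
      rw [← CStarRing.norm_star_mul_self, hTsT, norm_smul]
      have : ‖((c ^ 2 : ℝ) : ℂ)‖ = c ^ 2 := by
        rw [Complex.norm_real, Real.norm_eq_abs, abs_of_nonneg (by positivity)]
      rw [this]
      nlinarith [hPn, norm_nonneg (P k), sq_nonneg c, hc0]
    nlinarith [norm_nonneg (a * b * P k), hc0]
  -- main estimate
  refine ContinuousLinearMap.opNorm_le_bound x (pow_nonneg hq0.le k) ?_
  intro ζ
  set η : H := (a * b * P k) ζ with hη_def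
  have h2 : x ((star b * star a) η) = ((c ^ 2 : ℝ) : ℂ) • x ζ := by
    have hk1 : (star b * star a) η = ((c ^ 2 : ℝ) : ℂ) • (P k) ζ := by
      have := congrFun (congrArg DFunLike.coe hKey) ζ
      simpa [ContinuousLinearMap.mul_apply, hη_def] using this
    rw [hk1, map_smul]
    rw [show x ((P k) ζ) = (x * P k) ζ from rfl, hxP]
  have hAη : A η = ((q ^ (2*(k+1)) : ℝ) : ℂ) • η := by
    have := congrFun (congrArg DFunLike.coe hATe) ζ
    simpa [ContinuousLinearMap.mul_apply, hη_def] using this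
  have h3 : x ((star b * star a) η) =
      ((q ^ (2*k) - q ^ (2*(k+1)) : ℝ) : ℂ) • y η := by
    have h4 := congrFun (congrArg DFunLike.coe hE) η
    simp only [ContinuousLinearMap.smul_apply, ContinuousLinearMap.add_apply,
      ContinuousLinearMap.mul_apply] at h4
    rw [hAη, map_smul] at h4
    have h5 := eq_sub_of_add_eq' h4.symm
    rw [← sub_smul, ← Complex.ofReal_sub] at h5
    simpa [ContinuousLinearMap.mul_apply] using h5
  have key : ((c ^ 2 : ℝ) : ℂ) • x ζ = ((q ^ (2*k) - q ^ (2*(k+1)) : ℝ) : ℂ) • y η :=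
    h2.symm.trans h3
  have hd0 : (0:ℝ) ≤ q ^ (2*k) - q ^ (2*(k+1)) := by
    have : q ^ (2*(k+1)) ≤ q ^ (2*k) := pow_le_pow_of_le_one hq0.le hq1.le (by omega)
    linarith
  have hnorm_eq : c ^ 2 * ‖x ζ‖ = (q ^ (2*k) - q ^ (2*(k+1))) * ‖y η‖ := by
    have := congrArg norm key
    rw [norm_smul, norm_smul, Complex.norm_real, Complex.norm_real,
      Real.norm_eq_abs, Real.norm_eq_abs, abs_of_nonneg (by positivity),
      abs_of_nonneg hd0] at this
    exact this
  have hηn : ‖η‖ ≤ c * ‖ζ‖ := by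
    calc ‖η‖ ≤ ‖a * b * P k‖ * ‖ζ‖ := (a * b * P k).le_opNorm ζ
    _ ≤ c * ‖ζ‖ := by
        have := norm_nonneg ζ
        nlinarith [hTnorm]
  have hyη : ‖y η‖ ≤ c * ‖ζ‖ := by
    calc ‖y η‖ ≤ ‖y‖ * ‖η‖ := y.le_opNorm η
    _ ≤ 1 * (c * ‖ζ‖) := by
        have h8 := norm_nonneg η
        have h9 := norm_nonneg y
        nlinarith [hδ1, hηn]
    _ = c * ‖ζ‖ := one_mul _
  -- final arithmetic
  have h1q : 1 - q ^ 2 ≤ s := by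
    have hq2 : q ^ (2*(k+1)) ≤ q ^ 2 := pow_le_pow_of_le_one hq0.le hq1.le (by omega)
    have hq21 : q ^ 2 ≤ 1 := pow_le_one₀ hq0.le hq1.le
    nlinarith [hs2, hs0]
  have hd : (q ^ (2*k) - q ^ (2*(k+1))) * c ≤ q ^ k * c ^ 2 := by
    have e1 : q ^ (2*(k+1)) = q ^ k * q ^ k * q ^ 2 := by
      rw [show 2*(k+1) = k + k + 2 by ring, pow_add, pow_add]
    have e2 : q ^ (2*k) = q ^ k * q ^ k := by
      rw [show 2*k = k + k by ring, pow_add]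
    have h10 : (1 - q^2) * s ≤ s * s := mul_le_mul_of_nonneg_right h1q hs0.le
    have h11 : (0:ℝ) < q^k * q^k * q^k := by positivity
    rw [e1, e2, hc_def]
    nlinarith [mul_le_mul_of_nonneg_left h10 h11.le]
  have hb1 : c ^ 2 * ‖x ζ‖ ≤ c ^ 2 * (q ^ k * ‖ζ‖) := by
    rw [hnorm_eq]
    have hz := norm_nonneg ζ
    nlinarith [hyη, hd, hd0, hc0]
  exact le_of_mul_le_mul_left hb1 (by positivity)
end
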